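/- arXiv:2209.02760 — 4 statements merged into one kernel-verified Lean document; each statement's English description precedes it below -/
import Mathlib

section
/- Let n ≥ 4, identify W_3 with the subgroup ⟨x_1, x_2, x_3⟩ of W_n, and let F be a characteristic finite-index subgroup of W_3. Equip the direct product F^{n−3} with the diagonal Aut(W_3)-action φ·(w_4, …, w_n) = (φ(w_4), …, φ(w_n)) (well defined since F is characteristic). Then the map sending ((w_4, …, w_n), φ) ∈ F^{n−3} ⋊ Aut(W_3) to the endomorphism Φ of W_n determined by Φ(x_i) = φ(x_i) for 1 ≤ i ≤ 3 and Φ(x_i) = w_i⁻¹ x_i w_i for 4 ≤ i ≤ n is a well-defined injective group homomorphism from F^{n−3} ⋊ Aut(W_3) into Aut(W_n); in particular each such Φ is an automorphism of W_n. -/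
/-- Relations of the free Coxeter group: each generator squares to the identity. -/
def coxeterRels (n : ℕ) : Set (FreeGroup (Fin n)) := Set.range fun i => (FreeGroup.of i) ^ 2

/-- The free Coxeter group of rank `n`, i.e. the free product of `n` copies of `ℤ/2ℤ`. -/
abbrev W (n : ℕ) : Type := PresentedGroup (coxeterRels n)

/-- The standard order-2 generators `x_1, …, x_n` of `W n` (here indexed by `Fin n`). -/
def x (n : ℕ) (i : Fin n) : W n := PresentedGroup.of i

/-- The subgroup of inner automorphisms of a group. -/
def Inn (G : Type*) [Group G] : Subgroup (MulAut G) := (MulAut.conj : G →* MulAut G).range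

instance Inn.normal (G : Type*) [Group G] : (Inn G).Normal := by
  constructor
  rintro - ⟨g, rfl⟩ φ
  refine ⟨φ g, ?_⟩
  ext y
  simp [MulAut.conj]

/-- The outer automorphism group `Aut(G)/Inn(G)`. -/
abbrev Out (G : Type*) [Group G] : Type _ := MulAut G ⧸ Inn G
/-- Extension of an automorphism of `M` to the diagonal automorphism of `ι → M`. -/
def diagAut (ι : Type*) (M : Type*) [Group M] : MulAut M →* MulAut (ι → M) where
  toFun e := MulEquiv.piCongrRight fun _ => e
  map_one' := by ext; rfl
  map_mul' e₁ e₂ := by ext; rfl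
/-- Restriction of automorphisms to a characteristic subgroup. -/
noncomputable def charRestrict {H : Type*} [Group H] (F : Subgroup H)
    (hF : F.Characteristic) : MulAut H →* MulAut ↥F where
  toFun e := (e.subgroupMap F).trans (MulEquiv.subgroupCongr (by
    rw [Subgroup.map_equiv_eq_comap_symm]
    exact hF.fixed e.symm))
  map_one' := by ext; rfl
  map_mul' e₁ e₂ := by ext; rfl
/-- The copy of `W 3` inside `W n` generated by the first three standard generators. -/
def W3sub (n : ℕ) : Subgroup (W n) :=
  Subgroup.closure {g | ∃ i : Fin n, (i : ℕ) < 3 ∧ g = x n i}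

namespace CoxAux

variable {n : ℕ}

lemma x_sq (n : ℕ) (i : Fin n) : x n i ^ 2 = 1 := by
  have h : ((FreeGroup.of i) ^ 2 : FreeGroup (Fin n)) ∈ Subgroup.normalClosure (coxeterRels n) :=
    Subgroup.subset_normalClosure ⟨i, rfl⟩
  show PresentedGroup.mk (coxeterRels n) (FreeGroup.of i) ^ 2 = 1
  rw [← map_pow]
  exact (QuotientGroup.eq_one_iff _).2 h

lemma x_mul_self (n : ℕ) (i : Fin n) : x n i * x n i = 1 := by
  have := x_sq n i; rwa [pow_two] at this

lemma x_inv (n : ℕ) (i : Fin n) : (x n i)⁻¹ = x n i :=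
  inv_eq_of_mul_eq_one_right (x_mul_self n i)

def mkHom {G : Type*} [Group G] (f : Fin n → G) (hf : ∀ i, f i ^ 2 = 1) : W n →* G :=
  PresentedGroup.toGroup (f := f) (by rintro r ⟨i, rfl⟩; simpa using hf i)

@[simp] lemma mkHom_x {G : Type*} [Group G] (f : Fin n → G) (hf : ∀ i, f i ^ 2 = 1) (i : Fin n) :
    mkHom f hf (x n i) = f i := PresentedGroup.toGroup.of _

/-! ### The action on reduced words -/

def Red (n : ℕ) : Type := {l : List (Fin n) // l.Chain' (· ≠ ·)}

def sigFun (i : Fin n) : Red n → Red n := fun t =>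
  match t with
  | ⟨[], _⟩ => ⟨[i], List.isChain_singleton i⟩
  | ⟨a :: l, h⟩ =>
    if ha : a = i then ⟨l, h.tail⟩
    else ⟨i :: a :: l, List.isChain_cons_cons.2 ⟨fun e => ha e.symm, h⟩⟩

lemma sigFun_invol (i : Fin n) : Function.Involutive (sigFun i) := by
  rintro ⟨l, h⟩
  match l, h with
  | [], h => simp [sigFun]; rfl
  | a :: l, h =>
    by_cases ha : a = i
    · subst ha
      match l, h with
      | [], h => simp [sigFun]; rfl
      | b :: l, h =>
        have hba : a ≠ b := List.isChain_cons_cons.1 h |>.1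
        simp [sigFun, Ne.symm hba]; rfl
    · simp [sigFun, ha]; rfl

def sig (i : Fin n) : Equiv.Perm (Red n) := (sigFun_invol i).toPerm _

lemma sig_sq (i : Fin n) : sig i ^ 2 = 1 := by
  ext t
  simp [sig, pow_two, sigFun_invol i t]

def rho : W n →* Equiv.Perm (Red n) := mkHom sig sig_sq

@[simp] lemma rho_x (i : Fin n) : rho (x n i) = sig i := mkHom_x _ _ _

def wordProd (n : ℕ) (l : List (Fin n)) : W n := (l.map (x n)).prod

@[simp] lemma wordProd_nil : wordProd n [] = 1 := rfl
@[simp] lemma wordProd_cons (a : Fin n) (l : List (Fin n)) :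
    wordProd n (a :: l) = x n a * wordProd n l := by simp [wordProd]

lemma sig_spec (j : Fin n) (t : Red n) :
    wordProd n ((sig j t).val) = x n j * wordProd n t.val := by
  obtain ⟨l, h⟩ := t
  match l, h with
  | [], h => simp [sig, Function.Involutive.toPerm, sigFun]
  | a :: l, h =>
    by_cases ha : a = j
    · subst ha
      simp [sig, Function.Involutive.toPerm, sigFun, ← mul_assoc, x_mul_self]
    · simp [sig, Function.Involutive.toPerm, sigFun, ha]

lemma rho_spec (g : W n) : ∀ t : Red n,
    wordProd n ((rho g t).val) = g * wordProd n t.val := by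
  have hg : g ∈ Subgroup.closure (Set.range (x n)) := by
    have : Subgroup.closure (Set.range (x n)) = ⊤ := PresentedGroup.closure_range_of _
    simp [this]
  induction hg using Subgroup.closure_induction with
  | mem g hg =>
    obtain ⟨j, rfl⟩ := hg
    intro t
    simpa using sig_spec j t
  | one => simp
  | mul a b _ _ ha hb =>
    intro t
    have : rho (a * b) t = rho a (rho b t) := by simp [map_mul]
    rw [this, ha, hb, mul_assoc]
  | inv a _ ha =>
    intro t
    have h1 := ha ((rho a)⁻¹ t)
    have h2 : rho a ((rho a)⁻¹ t) = t := (rho a).apply_symm_apply t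
    rw [h2] at h1
    have h3 : rho a⁻¹ t = (rho a)⁻¹ t := by simp [map_inv]
    rw [eq_comm, ← eq_inv_mul_iff_mul_eq] at h1
    rw [h3, ← h1]



lemma sig_apply_nil (j : Fin n) (h : ([] : List (Fin n)).Chain' (· ≠ ·)) :
    sig j ⟨[], h⟩ = ⟨[j], List.isChain_singleton j⟩ := rfl

lemma sig_apply_cons (j a : Fin n) (l : List (Fin n)) (h : (a :: l).Chain' (· ≠ ·)) :
    sig j ⟨a :: l, h⟩ = if ha : a = j then ⟨l, h.tail⟩
      else ⟨j :: a :: l, List.isChain_cons_cons.2 ⟨fun e => ha e.symm, h⟩⟩ := rfl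

lemma claimD (s : List (Fin n)) (hs : ∀ b ∈ s.head?, 3 ≤ (b : ℕ)) (g : W n) (hg : g ∈ W3sub n) :
    (∀ (u : List (Fin n)), (∀ a ∈ u, (a : ℕ) < 3) →
      ∀ (h : (u ++ s).Chain' (· ≠ ·)),
      ∃ (u' : List (Fin n)) (_ : ∀ a ∈ u', (a : ℕ) < 3) (h' : (u' ++ s).Chain' (· ≠ ·)),
        rho g ⟨u ++ s, h⟩ = ⟨u' ++ s, h'⟩) := by
  set P : W n → Prop := fun g => ∀ (u : List (Fin n)), (∀ a ∈ u, (a : ℕ) < 3) →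
      ∀ (h : (u ++ s).Chain' (· ≠ ·)),
      ∃ (u' : List (Fin n)) (_ : ∀ a ∈ u', (a : ℕ) < 3) (h' : (u' ++ s).Chain' (· ≠ ·)),
        rho g ⟨u ++ s, h⟩ = ⟨u' ++ s, h'⟩ with hP
  suffices hQ : P g ∧ P g⁻¹ from hQ.1
  induction hg using Subgroup.closure_induction with
  | mem g hgm =>
    obtain ⟨j, hj, rfl⟩ := hgm
    have base : P (x n j) := by
      intro u hu h
      rcases u with _ | ⟨a, u⟩
      · rcases s with _ | ⟨b, s'⟩
        · refine ⟨[j], by simpa using hj, List.isChain_singleton j, ?_⟩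
          simp only [List.nil_append, rho_x]
          rw [sig_apply_nil]
          rfl
        · have hb : 3 ≤ (b : ℕ) := hs b (by simp)
          have hbj : b ≠ j := fun e => by rw [e] at hb; omega
          refine ⟨[j], by simpa using hj,
            List.isChain_cons_cons.2 ⟨fun e => hbj (by simpa using e.symm), by simpa [List.Chain'] using h⟩, ?_⟩
          simp only [List.nil_append, rho_x]
          rw [sig_apply_cons]; refine (dif_neg hbj).trans ?_
          rfl
      · by_cases haj : a = j
        · subst haj
          refine ⟨u, fun b hb => hu b (List.mem_cons_of_mem _ hb), h.tail, ?_⟩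
          simp only [List.cons_append, rho_x]
          rw [sig_apply_cons]; exact dif_pos rfl
        · refine ⟨j :: a :: u, ?_, List.isChain_cons_cons.2 ⟨fun e => haj e.symm, h⟩, ?_⟩
          · intro b hbm
            simp only [List.mem_cons] at hbm
            rcases hbm with h2 | h2 | hbm
            · rw [h2]; exact hj
            · rw [h2]; exact hu a (List.mem_cons_self)
            · exact hu b (List.mem_cons_of_mem _ hbm)
          · simp only [List.cons_append, rho_x]
            rw [sig_apply_cons]; exact dif_neg haj
    exact ⟨base, by rwa [x_inv]⟩
  | one => constructor <;> · intro u hu h; exact ⟨u, hu, h, by simp; rfl⟩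
  | mul a b _ _ ha hb =>
    have mulP : ∀ c d : W n, P c → P d → P (c * d) := by
      intro c d hc hd u hu h
      obtain ⟨u', hu', h', e⟩ := hd u hu h
      obtain ⟨u'', hu'', h'', e'⟩ := hc u' hu' h'
      refine ⟨u'', hu'', h'', ?_⟩
      have h2 : rho (c * d) ⟨u ++ s, h⟩ = rho c (rho d ⟨u ++ s, h⟩) := by simp [map_mul]; rfl
      rw [h2, e, e']
    refine ⟨mulP a b ha.1 hb.1, ?_⟩
    rw [mul_inv_rev]
    exact mulP b⁻¹ a⁻¹ hb.2 ha.2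
  | inv a _ ha => exact ⟨by simpa using ha.2, by simpa using ha.1⟩

lemma key_comm (i : Fin n) (hi : 3 ≤ (i : ℕ)) (g : W n) (hg : g ∈ W3sub n)
    (hc : g * x n i = x n i * g) : g = 1 := by
  have hnil : ([] : List (Fin n)).Chain' (· ≠ ·) := List.isChain_nil
  obtain ⟨m, hm, hm0, e0⟩ := claimD [] (by simp) g hg [] (by simp) hnil
  rw [List.append_nil] at hm0
  have hsing : ([i] : List (Fin n)).Chain' (· ≠ ·) := List.isChain_singleton i
  obtain ⟨u', hu', hu'', e1⟩ := claimD [i] (by simpa using hi) g hg [] (by simp) hsing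
  -- e0 : rho g ⟨[] ++ [], hnil⟩ = ⟨m ++ [], _⟩, e1 : rho g ⟨[] ++ [i], hsing⟩ = ⟨u' ++ [i], _⟩
  -- commuting computation
  have e0' : rho g (⟨[], hnil⟩ : Red n) = ⟨m, hm0⟩ := by
    have h' := e0
    simp only [List.nil_append, List.append_nil] at h'
    exact h'
  have h1 : rho g (sig i ⟨[], hnil⟩) = sig i (rho g ⟨[], hnil⟩) := by
    have ha : rho g (sig i ⟨[], hnil⟩) = rho (g * x n i) ⟨[], hnil⟩ := by
      simp [map_mul]; rfl
    have hb : rho (x n i * g) ⟨[], hnil⟩ = sig i (rho g ⟨[], hnil⟩) := by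
      simp [map_mul]; rfl
    rw [ha, hc, hb]
  -- LHS of h1 is rho g ⟨[i], _⟩
  have h2 : rho g (⟨[i], hsing⟩ : Red n) = sig i (⟨m, hm0⟩ : Red n) := by
    calc rho g (⟨[i], hsing⟩ : Red n) = rho g (sig i ⟨[], hnil⟩) := by rw [sig_apply_nil]
      _ = sig i (rho g ⟨[], hnil⟩) := h1
      _ = sig i (⟨m, hm0⟩ : Red n) := congrArg (sig i) e0'
  have hchain : (i :: m).Chain' (· ≠ ·) := by
    rcases m with _ | ⟨a, m'⟩
    · exact List.isChain_singleton i
    · refine List.isChain_cons_cons.2 ⟨?_, hm0⟩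
      intro e
      have h3 := hm a (List.mem_cons_self)
      rw [← e] at h3; omega
  have h4 : sig i (⟨m, hm0⟩ : Red n) = ⟨i :: m, hchain⟩ := by
    rcases m with _ | ⟨a, m'⟩
    · rw [sig_apply_nil]
    · have hai : a ≠ i := fun e => by
        have h3 := hm a (List.mem_cons_self); rw [e] at h3; omega
      rw [sig_apply_cons]; exact dif_neg hai
  have h5 : u' ++ [i] = i :: m :=
    congrArg Subtype.val (e1.symm.trans (h2.trans h4))
  rcases u' with _ | ⟨b, v⟩
  · have hm' : m = [] := by simpa using h5
    subst hm'
    have h6 := rho_spec g ⟨[], hnil⟩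
    have h7 : wordProd n ((rho g ⟨[], hnil⟩).val) = wordProd n ([] : List (Fin n)) :=
      congrArg (fun t : Red n => wordProd n t.val) e0'
    rw [h6] at h7
    simpa using h7
  · exfalso
    have hb3 : (b : ℕ) < 3 := hu' b (List.mem_cons_self)
    have : b = i := by
      have := congrArg (fun l => l.head?) h5
      simpa using this
    rw [this] at hb3; omega

end CoxAux

namespace CoxAux

section Main

variable {n : ℕ} {F : Subgroup ↥(W3sub n)}

def xmem {n : ℕ} {i : Fin n} (h : (i : ℕ) < 3) : x n i ∈ W3sub n :=
  Subgroup.subset_closure ⟨i, h, rfl⟩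

def gen (w : Fin (n - 3) → ↥F) (φ : MulAut ↥(W3sub n)) (i : Fin n) : W n :=
  if h : (i : ℕ) < 3 then ↑(φ ⟨x n i, xmem h⟩)
  else
    (((w ⟨(i : ℕ) - 3, by have := i.isLt; omega⟩ : ↥F) : ↥(W3sub n)) : W n)⁻¹ * x n i *
      (((w ⟨(i : ℕ) - 3, by have := i.isLt; omega⟩ : ↥F) : ↥(W3sub n)) : W n)

lemma gen_sq (w : Fin (n - 3) → ↥F) (φ : MulAut ↥(W3sub n)) (i : Fin n) :
    gen w φ i ^ 2 = 1 := by
  unfold gen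
  split
  · rename_i h
    have h1 : (⟨x n i, xmem h⟩ : ↥(W3sub n)) ^ 2 = 1 := by
      ext; simpa using x_sq n i
    calc (↑(φ ⟨x n i, xmem h⟩) : W n) ^ 2 = ↑((φ ⟨x n i, xmem h⟩) ^ 2) := by norm_cast
      _ = 1 := by rw [← map_pow, h1, map_one, OneMemClass.coe_one]
  · set c : W n := _
    have h2 : (c⁻¹ * x n i * c) ^ 2 = c⁻¹ * x n i ^ 2 * c := by
      rw [pow_two, pow_two]
      simp only [mul_assoc, mul_inv_cancel_left]
    rw [h2, x_sq]
    simp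

def Phi (w : Fin (n - 3) → ↥F) (φ : MulAut ↥(W3sub n)) : W n →* W n :=
  mkHom (gen w φ) (gen_sq w φ)

lemma Phi_x (w : Fin (n - 3) → ↥F) (φ : MulAut ↥(W3sub n)) (i : Fin n) :
    Phi w φ (x n i) = gen w φ i := mkHom_x _ _ _

lemma Phi_w3 (w : Fin (n - 3) → ↥F) (φ : MulAut ↥(W3sub n)) (g : W n) (hg : g ∈ W3sub n) :
    Phi w φ g = ↑(φ ⟨g, hg⟩) := by
  induction hg using Subgroup.closure_induction with
  | mem g hgm =>
    obtain ⟨j, hj, rfl⟩ := hgm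
    rw [Phi_x, gen, dif_pos hj]
  | one =>
    show (1 : W n) = ↑(φ (1 : ↥(W3sub n)))
    simp
  | mul a b ha hb iha ihb =>
    rw [map_mul, iha, ihb]
    show (↑(φ ⟨a, ha⟩ * φ ⟨b, hb⟩) : W n) = _
    rw [← map_mul]
    rfl
  | inv a ha iha =>
    rw [map_inv, iha]
    show (↑((φ ⟨a, ha⟩)⁻¹) : W n) = _
    rw [← map_inv]
    rfl

lemma charRestrict_coe (hchar : F.Characteristic) (φ : MulAut ↥(W3sub n)) (v : ↥F) :
    ((charRestrict F hchar φ v : ↥F) : ↥(W3sub n)) = φ (v : ↥(W3sub n)) := rfl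

lemma Phi_mul (hchar : F.Characteristic) (w w' : Fin (n - 3) → ↥F)
    (φ φ' : MulAut ↥(W3sub n)) :
    Phi (w * fun j => charRestrict F hchar φ (w' j)) (φ * φ') =
      (Phi w φ).comp (Phi w' φ') := by
  ext i
  show Phi _ _ (x n i) = Phi w φ (Phi w' φ' (x n i))
  rw [Phi_x, Phi_x, gen, gen]
  by_cases h : (i : ℕ) < 3
  · rw [dif_pos h, dif_pos h]
    rw [Phi_w3 w φ _ (φ' ⟨x n i, xmem h⟩).2]
    rfl
  · rw [dif_neg h, dif_neg h]
    set j : Fin (n - 3) := ⟨(i : ℕ) - 3, by have := i.isLt; omega⟩ with hj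
    have hc' : ∀ v : ↥F, Phi w φ ((v : ↥(W3sub n)) : W n) = ↑(φ ↑v) := fun v =>
      Phi_w3 w φ _ (v : ↥(W3sub n)).2
    rw [map_mul, map_mul, map_inv, hc', Phi_x, gen, dif_neg h]
    have hcoe : ((((w * fun j => charRestrict F hchar φ (w' j)) j : ↥F) : ↥(W3sub n)) : W n)
        = (((w j : ↥F) : ↥(W3sub n)) : W n) * ((φ ((w' j : ↥F) : ↥(W3sub n)) : ↥(W3sub n)) : W n) := by
      rw [Pi.mul_apply]
      norm_cast
    rw [hcoe]
    group; rfl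

end Main

end CoxAux
namespace CoxAux

section Main2

variable {n : ℕ} {F : Subgroup ↥(W3sub n)}

noncomputable def Theta0 (hchar : F.Characteristic) :
    ((Fin (n - 3) → ↥F)
        ⋊[(diagAut (Fin (n - 3)) ↥F).comp (charRestrict F hchar)] MulAut ↥(W3sub n))
      →* Monoid.End (W n) where
  toFun p := Phi p.left p.right
  map_one' := by
    show (Phi (1 : Fin (n - 3) → ↥F) (1 : MulAut ↥(W3sub n)) : W n →* W n) = MonoidHom.id (W n)
    ext i
    show Phi (1 : Fin (n - 3) → ↥F) 1 (x n i) = x n i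
    rw [Phi_x, gen]
    by_cases h : (i : ℕ) < 3
    · rw [dif_pos h]; rfl
    · rw [dif_neg h]; simp
  map_mul' p q := by
    have h1 : (p * q).left = p.left * fun j => charRestrict F hchar p.right (q.left j) := rfl
    have h2 : (p * q).right = p.right * q.right := rfl
    show Phi (p * q).left (p * q).right = (Phi p.left p.right).comp (Phi q.left q.right)
    rw [h1, h2, Phi_mul]

noncomputable def Theta (hchar : F.Characteristic) :
    ((Fin (n - 3) → ↥F)
        ⋊[(diagAut (Fin (n - 3)) ↥F).comp (charRestrict F hchar)] MulAut ↥(W3sub n))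
      →* MulAut (W n) where
  toFun p :=
    { toFun := Theta0 hchar p
      invFun := Theta0 hchar p⁻¹
      left_inv := fun g => by
        have h1 : (Theta0 hchar p⁻¹) ((Theta0 hchar p) g)
            = (Theta0 hchar p⁻¹ * Theta0 hchar p) g := rfl
        rw [h1, ← map_mul, inv_mul_cancel, map_one]
        rfl
      right_inv := fun g => by
        have h1 : (Theta0 hchar p) ((Theta0 hchar p⁻¹) g)
            = (Theta0 hchar p * Theta0 hchar p⁻¹) g := rfl
        rw [h1, ← map_mul, mul_inv_cancel, map_one]
        rfl
      map_mul' := map_mul _ }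
  map_one' := by
    ext g
    show Theta0 hchar 1 g = g
    rw [map_one]
    rfl
  map_mul' p q := by
    ext g
    show Theta0 hchar (p * q) g = Theta0 hchar p (Theta0 hchar q g)
    rw [map_mul]
    rfl

end Main2

end CoxAux

/-- Let `n ≥ 4`, let `F` be a characteristic finite-index subgroup of the copy of `W 3` in
`W n`. The map sending `((w_4, …, w_n), φ)` to the automorphism `Φ` of `W n` with
`Φ(x_i) = φ(x_i)` for `i ≤ 3` and `Φ(x_i) = w_i⁻¹ x_i w_i` for `i ≥ 4` gives a well-defined
injective homomorphism `F^{n-3} ⋊ Aut(W 3) → Aut(W n)` (with the diagonal action). -/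
theorem exists_embedding_into_aut (n : ℕ) (hn : 4 ≤ n)
    (F : Subgroup ↥(W3sub n)) (hchar : F.Characteristic) (hfin : F.index ≠ 0) :
    ∃ Θ : ((Fin (n - 3) → ↥F)
            ⋊[(diagAut (Fin (n - 3)) ↥F).comp (charRestrict F hchar)] MulAut ↥(W3sub n))
          →* MulAut (W n),
      Function.Injective Θ ∧
        ∀ p,
          (∀ i : Fin n, ∀ h : (i : ℕ) < 3,
            (Θ p) (x n i) =
              ((p.right ⟨x n i, Subgroup.subset_closure ⟨i, h, rfl⟩⟩ : ↥(W3sub n)) : W n)) ∧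
          (∀ i : Fin n, ∀ h : 3 ≤ (i : ℕ),
            (Θ p) (x n i) =
              (((p.left ⟨(i : ℕ) - 3, by omega⟩ : ↥F) : ↥(W3sub n)) : W n)⁻¹ * x n i *
                (((p.left ⟨(i : ℕ) - 3, by omega⟩ : ↥F) : ↥(W3sub n)) : W n)) := by
  classical
  refine ⟨CoxAux.Theta hchar, ?_, ?_⟩
  · rw [injective_iff_map_eq_one]
    intro p hp
    have hx : ∀ i : Fin n, CoxAux.Phi p.left p.right (x n i) = x n i := by
      intro i
      have h1 : CoxAux.Theta hchar p (x n i) = (1 : MulAut (W n)) (x n i) := by rw [hp]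
      simp at h1; exact h1
    have hr : p.right = 1 := by
      have key : ∀ (g : W n) (hg : g ∈ W3sub n), ((p.right ⟨g, hg⟩ : ↥(W3sub n)) : W n) = g := by
        intro g hg
        induction hg using Subgroup.closure_induction with
        | mem g hgm =>
          obtain ⟨j, hj, rfl⟩ := hgm
          have h1 := hx j
          rw [CoxAux.Phi_x, CoxAux.gen, dif_pos hj] at h1
          exact h1
        | one =>
          show ((p.right (1 : ↥(W3sub n)) : ↥(W3sub n)) : W n) = 1
          rw [map_one]; rfl
        | mul a b ha hb iha ihb =>
          have h2 : (⟨a * b, mul_mem ha hb⟩ : ↥(W3sub n)) = ⟨a, ha⟩ * ⟨b, hb⟩ := rfl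
          rw [h2, map_mul, Subgroup.coe_mul, iha, ihb]
        | inv a ha iha =>
          have h2 : (⟨a⁻¹, inv_mem ha⟩ : ↥(W3sub n)) = (⟨a, ha⟩ : ↥(W3sub n))⁻¹ := rfl
          rw [h2, map_inv, Subgroup.coe_inv, iha]
      refine MulEquiv.ext fun a => ?_
      obtain ⟨g, hg⟩ := a
      show p.right ⟨g, hg⟩ = ⟨g, hg⟩
      exact Subtype.ext (key g hg)
    have hl : p.left = 1 := by
      funext j
      have hj3 : ((j : ℕ) + 3) < n := by have := j.isLt; omega
      have hi3 : ¬ ((⟨(j : ℕ) + 3, hj3⟩ : Fin n) : ℕ) < 3 := by simp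
      set i : Fin n := ⟨(j : ℕ) + 3, hj3⟩ with hidef
      have h1 := hx i
      rw [CoxAux.Phi_x, CoxAux.gen, dif_neg hi3] at h1
      set c : W n :=
        (((p.left ⟨(i : ℕ) - 3, by have := i.isLt; omega⟩ : ↥F) : ↥(W3sub n)) : W n) with hc
      have h1' : c⁻¹ * x n i * c = x n i := h1
      have hcomm : c * x n i = x n i * c := by
        have h2 := congrArg (fun y => c * y) h1'
        simp only [← mul_assoc, mul_inv_cancel, one_mul] at h2
        exact h2.symm
      have hkey : c = 1 := CoxAux.key_comm i (by simp [hidef]) c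
        (SetLike.coe_mem _) hcomm
      have hj2 : (⟨(i : ℕ) - 3, by have := i.isLt; omega⟩ : Fin (n - 3)) = j :=
        Fin.ext (by simp [hidef])
      show p.left j = 1
      apply Subtype.ext
      apply Subtype.ext
      rw [← hj2]
      rw [hc] at hkey
      simpa using hkey
    exact SemidirectProduct.ext hl (by rw [hr]; rfl)
  · intro p
    constructor
    · intro i h
      show CoxAux.Phi p.left p.right (x n i) = _
      rw [CoxAux.Phi_x, CoxAux.gen, dif_pos h]
    · intro i h
      show CoxAux.Phi p.left p.right (x n i) = _
      rw [CoxAux.Phi_x, CoxAux.gen, dif_neg (by omega)]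
end

section
/- Let n ≥ 4 and identify W_3 with the subgroup ⟨x_1, x_2, x_3⟩ of W_n. Let φ ∈ Aut(W_3) and w_4, …, w_n ∈ W_3, and let Φ be the automorphism of W_n determined by Φ(x_i) = φ(x_i) for 1 ≤ i ≤ 3 and Φ(x_i) = w_i⁻¹ x_i w_i for 4 ≤ i ≤ n. If φ is not an inner automorphism of W_3, then Φ is not an inner automorphism of W_n (i.e. Φ has nontrivial image in Out(W_n)). -/
namespace FCA


variable {n : ℕ}

theorem x_sq (i : Fin n) : x n i * x n i = 1 := by
  have h : (PresentedGroup.mk (coxeterRels n)) (FreeGroup.of i ^ 2) = 1 :=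
    (QuotientGroup.eq_one_iff _).2 (Subgroup.subset_normalClosure ⟨i, rfl⟩)
  simpa [sq, map_mul, x, PresentedGroup.of] using h

/-- The one-step letter action on words. -/
def tfun (i : Fin n) : List (Fin n) → List (Fin n)
  | [] => [i]
  | a :: l => if a = i then l else i :: a :: l

theorem chain'_tfun (i : Fin n) {l : List (Fin n)} (h : l.Chain' (· ≠ ·)) :
    (tfun i l).Chain' (· ≠ ·) := by
  match l with
  | [] => exact List.isChain_singleton i
  | a :: l =>
    by_cases hai : a = i
    · simp only [tfun, if_pos hai]; exact h.tail
    · simp only [tfun, if_neg hai]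
      exact List.isChain_cons_cons.2 ⟨fun h' => hai h'.symm, h⟩

theorem tfun_tfun (i : Fin n) {l : List (Fin n)} (h : l.Chain' (· ≠ ·)) :
    tfun i (tfun i l) = l := by
  match l with
  | [] => simp [tfun]
  | a :: l =>
    by_cases hai : a = i
    · subst hai
      simp only [tfun, if_pos rfl]
      match l, h with
      | [], _ => rfl
      | b :: l, h =>
        have hb : a ≠ b := (List.isChain_cons_cons.1 h).1
        simp [tfun, Ne.symm hb]
    · simp [tfun, hai]

/-- Reduced words. -/
abbrev R (n : ℕ) : Type := {l : List (Fin n) // l.Chain' (· ≠ ·)}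

/-- Generator action as a permutation of reduced words. -/
def t (i : Fin n) : Equiv.Perm (R n) :=
  Function.Involutive.toPerm (fun l => ⟨tfun i l.1, chain'_tfun i l.2⟩)
    (fun l => Subtype.ext (tfun_tfun i l.2))

@[simp] theorem t_apply (i : Fin n) (l : R n) : (t i l).1 = tfun i l.1 := rfl

theorem t_sq (i : Fin n) : t (n := n) i * t i = 1 := by
  apply Equiv.ext
  intro l
  simp only [Equiv.Perm.mul_apply, Equiv.Perm.one_apply]
  exact Subtype.ext (tfun_tfun i l.2)

/-- The homomorphism from `W n` to permutations of reduced words. -/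
def toPerm : W n →* Equiv.Perm (R n) :=
  PresentedGroup.toGroup (f := t) (by
    rintro r ⟨i, rfl⟩
    simp only [map_pow, FreeGroup.lift_apply_of, sq]
    exact t_sq i)

@[simp] theorem toPerm_x (i : Fin n) : toPerm (x n i) = t i :=
  PresentedGroup.toGroup.of _

def eval (l : List (Fin n)) : W n := (l.map (x n)).prod

@[simp] theorem eval_nil : eval ([] : List (Fin n)) = 1 := rfl
@[simp] theorem eval_cons (i : Fin n) (l : List (Fin n)) :
    eval (i :: l) = x n i * eval l := by simp [eval]

theorem key (g : W n) (l : R n) : eval (toPerm g l).1 = g * eval l.1 := by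
  revert l
  refine PresentedGroup.generated_by _
    { carrier := {g : W n | ∀ l : R n, eval (toPerm g l).1 = g * eval l.1}
      one_mem' := by intro l; simp
      mul_mem' := by
        intro a b ha hb l
        simp only [map_mul, Equiv.Perm.mul_apply]
        rw [ha, hb, mul_assoc]
      inv_mem' := by
        intro a ha l
        have := ha ((toPerm a)⁻¹ l)
        simp only [map_inv] at this ⊢
        rw [← Equiv.Perm.mul_apply, mul_inv_cancel, Equiv.Perm.one_apply] at this
        rw [eq_inv_mul_iff_mul_eq, ← this] } ?_ g
  intro j l
  have hx : (PresentedGroup.of j : W n) = x n j := rfl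
  rw [hx, toPerm_x]
  match l with
  | ⟨[], _⟩ => simp [tfun]
  | ⟨a :: m, hm⟩ =>
    by_cases haj : a = j
    · subst haj
      simp [tfun, ← mul_assoc, x_sq]
    · simp [tfun, haj]

def e : R n := ⟨[], List.isChain_nil⟩

def nf (g : W n) : R n := toPerm g e

theorem eval_nf (g : W n) : eval (nf g).1 = g := by
  simpa [e, nf] using key g e

theorem F1 {l : List (Fin n)} (hl : l.Chain' (· ≠ ·)) : (toPerm (eval l) e).1 = l := by
  induction l with
  | nil => simp [e]
  | cons i l ih =>
    rw [eval_cons, map_mul, Equiv.Perm.mul_apply]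
    have h1 : (toPerm (eval l) e).1 = l := ih hl.tail
    rw [toPerm_x]
    rw [show toPerm (eval l) e = ⟨l, hl.tail⟩ from Subtype.ext h1]
    match l, hl with
    | [], _ => rfl
    | b :: l, hl =>
      have : b ≠ i := fun h => (List.isChain_cons_cons.1 hl).1 h.symm
      simp [tfun, this]

def sing (a : Fin n) : R n := ⟨[a], List.isChain_singleton a⟩

theorem F2 {a : Fin n} : ∀ {l : List (Fin n)}, l.Chain' (· ≠ ·) →
    l.getLast? ≠ some a → (toPerm (eval l) (sing a)).1 = l ++ [a] := by
  intro l
  induction l with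
  | nil => intro _ _; simp [sing]
  | cons i l ih =>
    intro hl hla
    rw [eval_cons, map_mul, Equiv.Perm.mul_apply, toPerm_x]
    match l, hl, hla with
    | [], _, hla =>
      have hia : i ≠ a := by simpa using hla
      have : (toPerm (eval []) (sing a)) = sing a := by simp [sing]
      rw [this]
      simp [sing, tfun, Ne.symm hia]
    | b :: l, hl, hla =>
      have h2 : ((b :: l).getLast?) ≠ some a := by
        rwa [List.getLast?_cons_cons] at hla
      have h1 := ih hl.tail h2
      rw [show toPerm (eval (b :: l)) (sing a) =
        ⟨b :: l ++ [a], h1 ▸ (toPerm (eval (b :: l)) (sing a)).2⟩ from Subtype.ext h1]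
      have hbi : b ≠ i := fun h => (List.isChain_cons_cons.1 hl).1 h.symm
      simp [tfun, hbi]

theorem F3 {a : Fin n} {l : List (Fin n)} (hl : (l ++ [a]).Chain' (· ≠ ·)) :
    (toPerm (eval (l ++ [a])) (sing a)).1 = l := by
  have hev : eval (l ++ [a]) = eval l * x n a := by simp [eval]
  rw [hev, map_mul, Equiv.Perm.mul_apply, toPerm_x]
  have : t a (sing a) = e := Subtype.ext (by simp [sing, e, tfun])
  rw [this]
  exact F1 (hl.prefix ⟨[a], rfl⟩)

theorem cent {u : W n} {i : Fin n} (h : u * x n i = x n i * u) : u = 1 ∨ u = x n i := by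
  have hnf : nf (u * x n i) = nf (x n i * u) := congrArg nf h
  have hL : eval (nf u).1 = u := eval_nf u
  have hred : (nf u).1.Chain' (· ≠ ·) := (nf u).2
  have hmul1 : nf (u * x n i) = toPerm u (sing i) := by
    simp only [nf, map_mul, Equiv.Perm.mul_apply, toPerm_x]
    congr 1
  have hmul2 : nf (x n i * u) = t i (nf u) := by
    simp [nf, map_mul, Equiv.Perm.mul_apply]
  rcases (nf u).1.eq_nil_or_concat' with hnil | ⟨l', b, hcat⟩
  · left; rw [← hL, hnil, eval_nil]
  · by_cases hbi : b = i
    · subst hbi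
      -- u = eval (l' ++ [b])
      have h3 : (toPerm u (sing b)).1 = l' := by
        rw [← hL, hcat]; exact F3 (hcat ▸ hred)
      match l', hcat with
      | [], hcat =>
        right; rw [← hL, hcat]
        simp [eval]
      | a :: m, hcat =>
        exfalso
        have h4 : (t b (nf u)).1 = tfun b (a :: (m ++ [b])) := by rw [t_apply, hcat]; rfl
        have heq : tfun b (a :: (m ++ [b])) = a :: m := by
          rw [← h4, ← hmul2, ← hnf, hmul1, h3]
        by_cases hab : a = b
        · subst hab
          match m, hcat, heq with
          | [], hcat, heq =>
            have h5 := hred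
            rw [hcat] at h5
            exact (List.isChain_cons_cons.1 h5).1 rfl
          | c :: m, hcat, heq =>
            have hac : a ≠ c := by
              have := hred
              rw [hcat] at this
              exact (List.isChain_cons_cons.1 this).1
            simp only [tfun, if_pos rfl] at heq
            exact hac (List.cons.injEq .. ▸ heq).1.symm
        · simp only [tfun, if_neg hab] at heq
          have := congrArg List.length heq
          simp only [List.length_append, List.length_cons, List.length_nil] at this
          omega
    · -- last letter is not i
      have hlast : (nf u).1.getLast? ≠ some i := by
        rw [hcat, List.getLast?_concat]
        simpa using hbi
      have h3 : (toPerm u (sing i)).1 = (nf u).1 ++ [i] := by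
        conv_lhs => rw [← hL]
        exact F2 hred hlast
      exfalso
      have heq : tfun i (nf u).1 = (nf u).1 ++ [i] := by
        have h4 : (t i (nf u)).1 = tfun i (nf u).1 := rfl
        rw [← h4, ← hmul2, ← hnf, hmul1, h3]
      rw [hcat] at heq
      match l' with
      | [] =>
        simp only [tfun, List.nil_append, if_neg hbi] at heq
        exact hbi (List.cons.injEq .. ▸ heq).1.symm
      | a :: m =>
        by_cases hai : a = i
        · simp only [tfun, List.cons_append, if_pos hai] at heq
          have := congrArg List.length heq
          simp only [List.length_append, List.length_cons, List.length_nil] at this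
          omega
        · simp only [tfun, List.cons_append, if_neg hai] at heq
          exact hai (List.cons.injEq .. ▸ heq).1.symm

theorem xmul_ne {i j : Fin n} (hij : i ≠ j) : x n i * x n j ≠ x n j * x n i := by
  intro h
  have := congrArg (fun g => (nf g).1) h
  simp only [nf, map_mul, Equiv.Perm.mul_apply, toPerm_x] at this
  have hji : (t j (e (n := n))).1 = [j] := rfl
  have hij' : (t i (e (n := n))).1 = [i] := rfl
  have h1 : (t i (t j (e (n := n)))).1 = [i, j] := by
    have : t j (e (n := n)) = sing j := Subtype.ext hji
    rw [this]
    show tfun i [j] = [i, j]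
    simp [tfun, Ne.symm hij]
  have h2 : (t j (t i (e (n := n)))).1 = [j, i] := by
    have : t i (e (n := n)) = sing i := Subtype.ext hij'
    rw [this]
    show tfun j [i] = [j, i]
    simp [tfun, hij]
  rw [h1, h2] at this
  exact hij (List.cons.injEq .. ▸ this).1


/-- Retraction of `W n` onto the copy of `W 3`. -/
def pmap : W n →* W n :=
  PresentedGroup.toGroup (f := fun (i : Fin n) => if (i : ℕ) < 3 then x n i else 1) (by
    rintro r ⟨i, rfl⟩
    by_cases h : (i : ℕ) < 3 <;> simp [h, sq, ← mul_assoc, x_sq])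

@[simp] theorem pmap_x (i : Fin n) : pmap (x n i) = if (i : ℕ) < 3 then x n i else 1 :=
  PresentedGroup.toGroup.of (f := fun (j : Fin n) => if (j : ℕ) < 3 then x n j else 1) _

theorem pmap_fix {z : W n} (hz : z ∈ W3sub n) : pmap z = z := by
  have hz' : z ∈ Subgroup.closure {g | ∃ i : Fin n, (i : ℕ) < 3 ∧ g = x n i} := hz
  clear hz
  induction hz' using Subgroup.closure_induction with
  | mem z hzS => obtain ⟨i, hi, rfl⟩ := hzS; simp [hi]
  | one => simp
  | mul a b ha hb iha ihb => rw [map_mul, iha, ihb]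
  | inv a ha iha => rw [map_inv, iha]

end FCA

/-- Let `n ≥ 4`, `φ` an automorphism of the copy of `W 3` in `W n`, and `Φ` an automorphism
of `W n` with `Φ(x_i) = φ(x_i)` for `i ≤ 3` and `Φ(x_i) = w_i⁻¹ x_i w_i` (with `w_i ∈ W 3`)
for `i ≥ 4`. If `φ` is not inner, then `Φ` is not inner. -/
theorem not_inner_of_not_inner (n : ℕ) (hn : 4 ≤ n)
    (φ : MulAut ↥(W3sub n)) (w : Fin n → ↥(W3sub n)) (Φ : MulAut (W n))
    (h1 : ∀ i : Fin n, ∀ h : (i : ℕ) < 3,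
      Φ (x n i) = ((φ ⟨x n i, Subgroup.subset_closure ⟨i, h, rfl⟩⟩ : ↥(W3sub n)) : W n))
    (h2 : ∀ i : Fin n, 3 ≤ (i : ℕ) →
      Φ (x n i) = (w i : W n)⁻¹ * x n i * (w i : W n))
    (hφ : ¬ ∃ g : ↥(W3sub n), φ = MulAut.conj g) :
    ¬ ∃ g : W n, Φ = MulAut.conj g := by
  rintro ⟨g, rfl⟩
  have h30 : (3 : ℕ) < n := by omega
  set i3 : Fin n := ⟨3, h30⟩ with hi3
  have hΦ3 := h2 i3 (by rw [hi3])
  rw [MulAut.conj_apply] at hΦ3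
  set wv : W n := (w i3 : W n) with hwv
  have h'' : (wv * g) * x n i3 * (wv * g)⁻¹ = x n i3 := by
    calc (wv * g) * x n i3 * (wv * g)⁻¹
        = wv * (g * x n i3 * g⁻¹) * wv⁻¹ := by group
      _ = wv * (wv⁻¹ * x n i3 * wv) * wv⁻¹ := by rw [hΦ3]
      _ = x n i3 := by group
  have hc : (wv * g) * x n i3 = x n i3 * (wv * g) := by
    conv_rhs => rw [← h'']
    group
  have keyφ : ∀ (hg : g ∈ W3sub n),
      ∀ z (hz : z ∈ Subgroup.closure {g | ∃ i : Fin n, (i : ℕ) < 3 ∧ g = x n i}),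
      ((φ ⟨z, hz⟩ : ↥(W3sub n)) : W n) = g * z * g⁻¹ := by
    intro hg z hz
    induction hz using Subgroup.closure_induction with
    | mem z hzS =>
      obtain ⟨i, hi, rfl⟩ := hzS
      have h1' := h1 i hi
      rw [MulAut.conj_apply] at h1'
      exact h1'.symm
    | one => simp; rfl
    | mul a b ha hb iha ihb =>
      have hab : (⟨a * b, mul_mem ha hb⟩ : ↥(W3sub n)) = ⟨a, ha⟩ * ⟨b, hb⟩ := rfl
      rw [hab, map_mul, Subgroup.coe_mul, iha, ihb]
      group
    | inv a ha iha =>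
      have hai : (⟨a⁻¹, inv_mem ha⟩ : ↥(W3sub n)) = (⟨a, ha⟩ : ↥(W3sub n))⁻¹ := rfl
      rw [hai, map_inv, Subgroup.coe_inv, iha]
      group
  rcases FCA.cent hc with h0 | h0
  · -- wv * g = 1 : g lies in the copy of W 3, so φ is inner
    have hg : g ∈ W3sub n := by
      have : g = wv⁻¹ := eq_inv_of_mul_eq_one_right h0
      rw [this, hwv]
      exact Subgroup.inv_mem _ (w i3).2
    apply hφ
    refine ⟨⟨g, hg⟩, ?_⟩
    apply MulEquiv.ext
    intro y
    apply Subtype.ext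
    calc ((φ y : ↥(W3sub n)) : W n) = g * ↑y * g⁻¹ := keyφ hg y.1 y.2
      _ = ((MulAut.conj (⟨g, hg⟩ : ↥(W3sub n)) y : ↥(W3sub n)) : W n) := rfl
  · -- wv * g = x_3 : leads to a contradiction
    exfalso
    have hg : g = wv⁻¹ * x n i3 := by rw [← h0]; group
    have h04 : (0 : ℕ) < n := by omega
    set i0 : Fin n := ⟨0, h04⟩ with hi0
    have h10 := h1 i0 (by rw [hi0]; exact (by omega : (0:ℕ) < 3))
    rw [MulAut.conj_apply] at h10
    have hmem : g * x n i0 * g⁻¹ ∈ W3sub n := by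
      rw [h10]; exact SetLike.coe_mem _
    have hmem2 : x n i3 * x n i0 * (x n i3)⁻¹ ∈ W3sub n := by
      have hrw : x n i3 * x n i0 * (x n i3)⁻¹ = wv * (g * x n i0 * g⁻¹) * wv⁻¹ := by
        rw [hg]; group
      rw [hrw]
      exact Subgroup.mul_mem _ (Subgroup.mul_mem _ (w i3).2 hmem)
        (Subgroup.inv_mem _ (w i3).2)
    have hinv3 : (x n i3)⁻¹ = x n i3 := inv_eq_of_mul_eq_one_right (FCA.x_sq i3)
    have hcalc : FCA.pmap (x n i3 * x n i0 * (x n i3)⁻¹) = x n i0 := by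
      rw [map_mul, map_mul, map_inv, FCA.pmap_x, FCA.pmap_x]
      rw [if_neg (by rw [hi3]; exact (by omega : ¬ (3:ℕ) < 3)), if_pos (by rw [hi0]; exact (by omega : (0:ℕ) < 3))]
      simp
    have hfix : x n i3 * x n i0 * (x n i3)⁻¹ = x n i0 := by
      rw [← FCA.pmap_fix hmem2, hcalc]
    rw [hinv3] at hfix
    have hcomm : x n i3 * x n i0 = x n i0 * x n i3 := by
      have h' := congrArg (fun z => z * x n i3) hfix
      simpa [mul_assoc, FCA.x_sq i3] using h'
    exact FCA.xmul_ne (by rw [Fin.ne_iff_vne, hi3, hi0]; exact (by omega : (3:ℕ) ≠ 0)) hcomm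
end

section
/- There exists a subgroup H of Aut(W_3) such that H is a free group of rank 2 and H ∩ Inn(W_3) = {1}; equivalently, the restriction to H of the canonical projection Aut(W_3) → Out(W_3) is injective. In particular, Out(W_3) contains a free subgroup of rank 2. -/
open Pointwise

namespace FCAux

abbrev M3 := Matrix (Fin 3) (Fin 3) ℤ
abbrev M2 := Matrix (Fin 2) (Fin 2) ℤ
abbrev G3 := M3ˣ
abbrev G2 := M2ˣ

def ma : M3 := !![-1,0,0; 0,-1,0; 0,0,1]
def mb : M3 := !![-1,0,1; 0,-1,0; 0,0,1]
def mc : M3 := !![-1,0,0; 0,-1,1; 0,0,1]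

lemma ma_sq : ma * ma = 1 := by rw [Matrix.one_fin_three]; norm_num [Matrix.mul_fin_three, ma]
lemma mb_sq : mb * mb = 1 := by rw [Matrix.one_fin_three]; norm_num [Matrix.mul_fin_three, mb]
lemma mc_sq : mc * mc = 1 := by rw [Matrix.one_fin_three]; norm_num [Matrix.mul_fin_three, mc]

def ua : G3 := ⟨ma, ma, ma_sq, ma_sq⟩
def ub : G3 := ⟨mb, mb, mb_sq, mb_sq⟩
def uc : G3 := ⟨mc, mc, mc_sq, mc_sq⟩

-- the representation ρ : W 3 →* G3
lemma rho_rels : ∀ r ∈ coxeterRels 3, FreeGroup.lift (![ua, ub, uc] : Fin 3 → G3) r = 1 := by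
  rintro r ⟨i, rfl⟩
  rw [map_pow, FreeGroup.lift_apply_of]
  fin_cases i <;> [skip; skip; skip] <;>
    (ext : 1) <;>
    simp [pow_two, ua, ub, uc, ma_sq, mb_sq, mc_sq]

def ρ : W 3 →* G3 := PresentedGroup.toGroup rho_rels

@[simp] lemma ρ_x (i : Fin 3) : ρ (x 3 i) = ![ua, ub, uc] i := PresentedGroup.toGroup.of rho_rels


lemma of_sq (i : Fin 3) :
    (PresentedGroup.of (rels := coxeterRels 3) i) * PresentedGroup.of i = 1 := by
  have h : ((FreeGroup.of i)^2 : FreeGroup (Fin 3)) ∈ Subgroup.normalClosure (coxeterRels 3) :=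
    Subgroup.subset_normalClosure ⟨i, rfl⟩
  have h2 : (PresentedGroup.mk (coxeterRels 3)) ((FreeGroup.of i)^2) = 1 :=
    (QuotientGroup.eq_one_iff _).2 h
  rw [map_pow, pow_two] at h2
  exact h2
@[simp] lemma of_cancel (i : Fin 3) (t : W 3) :
    (PresentedGroup.of (rels := coxeterRels 3) i) * (PresentedGroup.of i * t) = t := by
  rw [← mul_assoc, of_sq, one_mul]
lemma xsq (i : Fin 3) : x 3 i * x 3 i = 1 := of_sq i

noncomputable section

local notation "a" => x 3 0
local notation "b" => x 3 1
local notation "c" => x 3 2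

def fword : Fin 3 → W 3 := ![a, b, a*(b*(a*(b*(c*(b*(a*(b*a)))))))]
def fword' : Fin 3 → W 3 := ![a, b, b*(a*(b*(a*(c*(a*(b*(a*b)))))))]
def gword : Fin 3 → W 3 := ![a, a*(c*(a*(c*(b*(c*(a*(c*a))))))), c]
def gword' : Fin 3 → W 3 := ![a, c*(a*(c*(a*(b*(a*(c*(a*c))))))), c]

lemma rels_check (f : Fin 3 → W 3) (h : ∀ i, f i * f i = 1) :
    ∀ r ∈ coxeterRels 3, FreeGroup.lift f r = 1 := by
  rintro r ⟨i, rfl⟩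
  rw [map_pow, FreeGroup.lift_apply_of, pow_two, h]

lemma fword_check : ∀ i, fword i * fword i = 1 := by
  intro i; fin_cases i <;> simp [fword, x, of_sq, mul_assoc]
lemma fword'_check : ∀ i, fword' i * fword' i = 1 := by
  intro i; fin_cases i <;> simp [fword', x, of_sq, mul_assoc]
lemma gword_check : ∀ i, gword i * gword i = 1 := by
  intro i; fin_cases i <;> simp [gword, x, of_sq, mul_assoc]
lemma gword'_check : ∀ i, gword' i * gword' i = 1 := by
  intro i; fin_cases i <;> simp [gword', x, of_sq, mul_assoc]

def φf : W 3 →* W 3 := PresentedGroup.toGroup (rels_check fword fword_check)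
def φf' : W 3 →* W 3 := PresentedGroup.toGroup (rels_check fword' fword'_check)
def ψf : W 3 →* W 3 := PresentedGroup.toGroup (rels_check gword gword_check)
def ψf' : W 3 →* W 3 := PresentedGroup.toGroup (rels_check gword' gword'_check)

lemma φcomp : φf.comp φf' = MonoidHom.id (W 3) := by
  ext i
  fin_cases i <;> simp [φf, φf', fword, fword', x, map_mul, mul_assoc, of_sq]
lemma φcomp' : φf'.comp φf = MonoidHom.id (W 3) := by
  ext i
  fin_cases i <;> simp [φf, φf', fword, fword', x, map_mul, mul_assoc, of_sq]
lemma ψcomp : ψf.comp ψf' = MonoidHom.id (W 3) := by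
  ext i
  fin_cases i <;> simp [ψf, ψf', gword, gword', x, map_mul, mul_assoc, of_sq]
lemma ψcomp' : ψf'.comp ψf = MonoidHom.id (W 3) := by
  ext i
  fin_cases i <;> simp [ψf, ψf', gword, gword', x, map_mul, mul_assoc, of_sq]

def φ : MulAut (W 3) := MonoidHom.toMulEquiv φf φf' φcomp' φcomp
def ψ : MulAut (W 3) := MonoidHom.toMulEquiv ψf ψf' ψcomp' ψcomp

@[simp] lemma φ_apply (g : W 3) : φ g = φf g := rfl
@[simp] lemma ψ_apply (g : W 3) : ψ g = ψf g := rfl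

end


lemma MN_inv₁ : (!![1,-4;0,1] : M2) * !![1,4;0,1] = 1 := by
  rw [Matrix.one_fin_two]; norm_num [Matrix.mul_fin_two]
lemma MN_inv₁' : (!![1,4;0,1] : M2) * !![1,-4;0,1] = 1 := by
  rw [Matrix.one_fin_two]; norm_num [Matrix.mul_fin_two]
lemma MN_inv₂ : (!![1,0;-4,1] : M2) * !![1,0;4,1] = 1 := by
  rw [Matrix.one_fin_two]; norm_num [Matrix.mul_fin_two]
lemma MN_inv₂' : (!![1,0;4,1] : M2) * !![1,0;-4,1] = 1 := by
  rw [Matrix.one_fin_two]; norm_num [Matrix.mul_fin_two]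

def uM : G2 := ⟨!![1,-4;0,1], !![1,4;0,1], MN_inv₁, MN_inv₁'⟩
def uN : G2 := ⟨!![1,0;-4,1], !![1,0;4,1], MN_inv₂, MN_inv₂'⟩

def V : Type := {v : Fin 2 → ℤ // v ≠ 0}

instance : MulAction G2 V where
  smul g v := ⟨g.val.mulVec v.1, by
    intro hz
    apply v.2
    have h1 : (g⁻¹).val.mulVec (g.val.mulVec v.1) = 0 := by rw [hz, Matrix.mulVec_zero]
    rwa [Matrix.mulVec_mulVec, ← Units.val_mul, inv_mul_cancel, Units.val_one,
      Matrix.one_mulVec] at h1⟩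
  one_smul v := Subtype.ext (by
    show (1 : G2).val.mulVec v.1 = v.1
    rw [Units.val_one, Matrix.one_mulVec])
  mul_smul g h v := Subtype.ext (by
    show (g * h).val.mulVec v.1 = g.val.mulVec (h.val.mulVec v.1)
    rw [Matrix.mulVec_mulVec, Units.val_mul])

@[simp] lemma smul_coe (g : G2) (v : V) : (g • v).1 = g.val.mulVec v.1 := rfl

def X0 : Set V := {v | (v.1 0)^2 > (v.1 1)^2 ∧ v.1 0 * v.1 1 ≤ 0}
def X1 : Set V := {v | (v.1 1)^2 > (v.1 0)^2 ∧ v.1 0 * v.1 1 ≤ 0}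
def Y0 : Set V := {v | (v.1 0)^2 > (v.1 1)^2 ∧ v.1 0 * v.1 1 > 0}
def Y1 : Set V := {v | (v.1 1)^2 > (v.1 0)^2 ∧ v.1 0 * v.1 1 > 0}

lemma vne (v : V) : ¬ (v.1 0 = 0 ∧ v.1 1 = 0) := by
  rintro ⟨h0, h1⟩
  apply v.2
  funext i; fin_cases i <;> assumption

lemma key1 (p q : ℤ) (h : ¬(p^2 > q^2 ∧ p * q > 0)) (hv : ¬(p = 0 ∧ q = 0)) :
    (p - 4*q)^2 > q^2 ∧ (p - 4*q) * q ≤ 0 := by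
  push_neg at h
  by_cases hq : q = 0
  · subst hq
    have hp : p ≠ 0 := fun hp => hv ⟨hp, rfl⟩
    constructor
    · nlinarith [sq_abs p, Int.one_le_abs hp, abs_nonneg p]
    · nlinarith
  · have hq1 : 1 ≤ |q| := Int.one_le_abs hq
    have hq2 : q^2 ≥ 1 := by nlinarith [sq_abs q, abs_nonneg q]
    rcases le_or_gt (p^2) (q^2) with hc | hc
    · constructor <;> nlinarith [sq_nonneg (p - q), sq_nonneg (p + q)]
    · have hpq := h hc
      constructor <;> nlinarith [sq_nonneg p]

lemma key2 (p q : ℤ) (h : ¬(p^2 > q^2 ∧ p * q ≤ 0)) (hv : ¬(p = 0 ∧ q = 0)) :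
    (p + 4*q)^2 > q^2 ∧ (p + 4*q) * q > 0 := by
  push_neg at h
  by_cases hq : q = 0
  · exfalso
    subst hq
    have hp : p ≠ 0 := fun hp => hv ⟨hp, rfl⟩
    have h2 : ¬ (p^2 > 0) := fun hpp => by have := h hpp; nlinarith
    exact h2 (by nlinarith [sq_abs p, Int.one_le_abs hp, abs_nonneg p])
  · have hq1 : 1 ≤ |q| := Int.one_le_abs hq
    have hq2 : q^2 ≥ 1 := by nlinarith [sq_abs q, abs_nonneg q]
    rcases le_or_gt (p^2) (q^2) with hc | hc
    · constructor <;> nlinarith [sq_nonneg (p - q), sq_nonneg (p + q)]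
    · have hpq := h hc
      constructor <;> nlinarith [sq_nonneg p]

lemma mulVec_uM (v : Fin 2 → ℤ) : uM.val.mulVec v = ![v 0 - 4 * v 1, v 1] := by
  funext i
  fin_cases i <;> (simp [uM, Matrix.mulVec, dotProduct, Fin.sum_univ_two, Matrix.vecHead, Matrix.vecTail]; try ring)
lemma mulVec_uM' (v : Fin 2 → ℤ) : (uM⁻¹).val.mulVec v = ![v 0 + 4 * v 1, v 1] := by
  funext i
  fin_cases i <;> (simp [uM, Units.inv_mk, Matrix.mulVec, dotProduct, Fin.sum_univ_two, Matrix.vecHead, Matrix.vecTail]; try ring)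
lemma mulVec_uN (v : Fin 2 → ℤ) : uN.val.mulVec v = ![v 0, v 1 - 4 * v 0] := by
  funext i
  fin_cases i <;> (simp [uN, Matrix.mulVec, dotProduct, Fin.sum_univ_two, Matrix.vecHead, Matrix.vecTail]; try ring)
lemma mulVec_uN' (v : Fin 2 → ℤ) : (uN⁻¹).val.mulVec v = ![v 0, v 1 + 4 * v 0] := by
  funext i
  fin_cases i <;> (simp [uN, Units.inv_mk, Matrix.mulVec, dotProduct, Fin.sum_univ_two, Matrix.vecHead, Matrix.vecTail]; try ring)

lemma ppM : uM • Y0ᶜ ⊆ X0 := by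
  rintro w ⟨v, hv, rfl⟩
  simp only [Y0, X0, Set.mem_compl_iff, Set.mem_setOf_eq, smul_coe, mulVec_uM] at hv ⊢
  simp only [Matrix.cons_val_zero, Matrix.cons_val_one, Matrix.head_cons]
  exact key1 (v.1 0) (v.1 1) hv (vne v)
lemma ppM' : uM⁻¹ • X0ᶜ ⊆ Y0 := by
  rintro w ⟨v, hv, rfl⟩
  simp only [X0, Y0, Set.mem_compl_iff, Set.mem_setOf_eq, smul_coe, mulVec_uM'] at hv ⊢
  simp only [Matrix.cons_val_zero, Matrix.cons_val_one, Matrix.head_cons]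
  exact key2 (v.1 0) (v.1 1) hv (vne v)
lemma ppN : uN • Y1ᶜ ⊆ X1 := by
  rintro w ⟨v, hv, rfl⟩
  simp only [Y1, X1, Set.mem_compl_iff, Set.mem_setOf_eq, smul_coe, mulVec_uN] at hv ⊢
  simp only [Matrix.cons_val_zero, Matrix.cons_val_one, Matrix.head_cons]
  have := key1 (v.1 1) (v.1 0) (fun hh => hv ⟨hh.1, by nlinarith [hh.2]⟩)
    (fun hh => vne v ⟨hh.2, hh.1⟩)
  exact ⟨this.1, by nlinarith [this.2]⟩
lemma ppN' : uN⁻¹ • X1ᶜ ⊆ Y1 := by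
  rintro w ⟨v, hv, rfl⟩
  simp only [X1, Y1, Set.mem_compl_iff, Set.mem_setOf_eq, smul_coe, mulVec_uN'] at hv ⊢
  simp only [Matrix.cons_val_zero, Matrix.cons_val_one, Matrix.head_cons]
  have := key2 (v.1 1) (v.1 0) (fun hh => hv ⟨hh.1, by nlinarith [hh.2]⟩)
    (fun hh => vne v ⟨hh.2, hh.1⟩)
  exact ⟨this.1, by nlinarith [this.2]⟩

lemma disj (S T : Set V) (h : ∀ v : V, v ∈ S → v ∈ T → False) : Disjoint S T :=
  Set.disjoint_left.mpr (fun {v} hS hT => h v hS hT)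

lemma sanov_injective : Function.Injective (FreeGroup.lift (![uM, uN] : Fin 2 → G2)) := by
  apply FreeGroup.injective_lift_of_ping_pong _ ![X0, X1] ![Y0, Y1]
  · intro i
    fin_cases i
    · exact ⟨⟨![1, 0], by intro h; simpa using congrFun h 0⟩, by show (![1,0] 0 : ℤ)^2 > (![1,0] 1)^2 ∧ (![1,0] 0 : ℤ) * ![1,0] 1 ≤ 0; norm_num⟩
    · exact ⟨⟨![0, 1], by intro h; simpa using congrFun h 1⟩, by show (![0,1] 1 : ℤ)^2 > (![0,1] 0)^2 ∧ (![0,1] 0 : ℤ) * ![0,1] 1 ≤ 0; norm_num⟩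
  · intro i j hij
    fin_cases i <;> fin_cases j <;>
      first
        | exact absurd rfl hij
        | exact disj X0 X1 (by rintro v ⟨h1, _⟩ ⟨h3, _⟩; simp [X0, X1] at h1 h3; nlinarith)
        | exact disj X1 X0 (by rintro v ⟨h1, _⟩ ⟨h3, _⟩; simp [X0, X1] at h1 h3; nlinarith)
  · intro i j hij
    fin_cases i <;> fin_cases j <;>
      first
        | exact absurd rfl hij
        | exact disj Y0 Y1 (by rintro v ⟨h1, _⟩ ⟨h3, _⟩; simp [Y0, Y1] at h1 h3; nlinarith)
        | exact disj Y1 Y0 (by rintro v ⟨h1, _⟩ ⟨h3, _⟩; simp [Y0, Y1] at h1 h3; nlinarith)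
  · intro i j
    fin_cases i <;> fin_cases j
    · exact disj X0 Y0 (by rintro v ⟨_, h2⟩ ⟨_, h4⟩; simp [X0, Y0] at h2 h4; nlinarith)
    · exact disj X0 Y1 (by rintro v ⟨h1, _⟩ ⟨h3, _⟩; simp [X0, Y1] at h1 h3; nlinarith)
    · exact disj X1 Y0 (by rintro v ⟨h1, _⟩ ⟨h3, _⟩; simp [X1, Y0] at h1 h3; nlinarith)
    · exact disj X1 Y1 (by rintro v ⟨_, h2⟩ ⟨_, h4⟩; simp [X1, Y1] at h2 h4; nlinarith)
  · intro i
    fin_cases i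
    · simpa using ppM
    · simpa using ppN
  · intro i
    fin_cases i
    · simpa using ppM'
    · simpa using ppN'



-- the multiplicative embedding of 2x2 matrices as upper-left blocks of 3x3 matrices
def emb (A : M2) : M3 := !![A 0 0, A 0 1, 0; A 1 0, A 1 1, 0; 0, 0, 1]

lemma emb_one : emb 1 = 1 := by
  rw [Matrix.one_fin_three]
  ext i j
  fin_cases i <;> fin_cases j <;> simp [emb, Matrix.one_apply]

lemma emb_mul (A B : M2) : emb (A * B) = emb A * emb B := by
  ext i j
  fin_cases i <;> fin_cases j <;>
    simp [emb, Matrix.mul_apply, Fin.sum_univ_two, Fin.sum_univ_three]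

def embM : M2 →* M3 := { toFun := emb, map_one' := emb_one, map_mul' := emb_mul }

def Ψ : G2 →* G3 := Units.map embM

lemma Ψ_val (g : G2) : (Ψ g).val = emb g.val := rfl

lemma Ψ_inj : Function.Injective Ψ := by
  intro g h hgh
  have h1 : emb g.val = emb h.val := congrArg Units.val hgh
  ext i j
  fin_cases i <;> fin_cases j
  · exact congrFun (congrFun h1 0) 0
  · exact congrFun (congrFun h1 0) 1
  · exact congrFun (congrFun h1 1) 0
  · exact congrFun (congrFun h1 1) 1

-- mod 4 reduction
def πmod : G2 →* (Matrix (Fin 2) (Fin 2) (ZMod 4))ˣ :=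
  Units.map ((Int.castRingHom (ZMod 4)).mapMatrix.toMonoidHom)

-- centralizer computation

lemma cent (g : G3) (h1 : g.val * ma = ma * g.val) (h2 : g.val * mb = mb * g.val)
    (h3 : g.val * mc = mc * g.val) : g = 1 ∨ g = -1 := by
  have e02 : g.val 0 2 = 0 := by
    have := congrFun (congrFun h1 0) 2
    simp [ma, Matrix.mul_apply, Fin.sum_univ_three, Matrix.vecHead, Matrix.vecTail] at this
    linarith
  have e12 : g.val 1 2 = 0 := by
    have := congrFun (congrFun h1 1) 2
    simp [ma, Matrix.mul_apply, Fin.sum_univ_three, Matrix.vecHead, Matrix.vecTail] at this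
    linarith
  have e20 : g.val 2 0 = 0 := by
    have := congrFun (congrFun h1 2) 0
    simp [ma, Matrix.mul_apply, Fin.sum_univ_three, Matrix.vecHead, Matrix.vecTail] at this
    linarith
  have e21 : g.val 2 1 = 0 := by
    have := congrFun (congrFun h1 2) 1
    simp [ma, Matrix.mul_apply, Fin.sum_univ_three, Matrix.vecHead, Matrix.vecTail] at this
    linarith
  have e00 : g.val 0 0 = g.val 2 2 := by
    have := congrFun (congrFun h2 0) 2
    simp [mb, Matrix.mul_apply, Fin.sum_univ_three, Matrix.vecHead, Matrix.vecTail, e02] at this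
    linarith
  have e10 : g.val 1 0 = 0 := by
    have := congrFun (congrFun h2 1) 2
    simp [mb, Matrix.mul_apply, Fin.sum_univ_three, Matrix.vecHead, Matrix.vecTail, e12] at this
    linarith
  have e01 : g.val 0 1 = 0 := by
    have := congrFun (congrFun h3 0) 2
    simp [mc, Matrix.mul_apply, Fin.sum_univ_three, Matrix.vecHead, Matrix.vecTail, e02] at this
    linarith
  have e11 : g.val 1 1 = g.val 2 2 := by
    have := congrFun (congrFun h3 1) 2
    simp [mc, Matrix.mul_apply, Fin.sum_univ_three, Matrix.vecHead, Matrix.vecTail, e12] at this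
    linarith
  have hval : g.val = !![g.val 2 2,0,0; 0,g.val 2 2,0; 0,0,g.val 2 2] := by
    ext i j
    fin_cases i <;> fin_cases j <;>
      simp [e02, e12, e20, e21, e00, e10, e01, e11, Matrix.vecHead, Matrix.vecTail]
  have hdet : IsUnit (g.val).det := by
    refine (Matrix.isUnit_iff_isUnit_det g.val).mp ?_
    exact ⟨g, rfl⟩
  have hdet2 : (g.val).det = (g.val 2 2)^3 := by
    nth_rewrite 1 [hval]
    rw [Matrix.det_fin_three]
    simp only [Matrix.of_apply, Matrix.cons_val, Matrix.cons_val_zero, Matrix.cons_val_one]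
    ring
  have ht1 : IsUnit (g.val 2 2) := by
    rw [hdet2] at hdet
    exact isUnit_of_dvd_unit (dvd_pow_self _ (by norm_num)) hdet
  rcases Int.isUnit_iff.mp ht1 with h | h
  · left
    refine Units.ext ?_
    rw [Units.val_one, hval, h]
    exact Matrix.one_fin_three.symm
  · right
    refine Units.ext ?_
    rw [Units.val_neg, Units.val_one, hval, h]
    ext i j
    fin_cases i <;> fin_cases j <;>
      simp [Matrix.neg_apply, Matrix.one_apply, Matrix.vecHead, Matrix.vecTail]

-- the affine subgroup: matrices of the form [[ε,0,v1],[0,ε,v2],[0,0,1]]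
def SAff : Subgroup G3 where
  carrier := {g | ∃ ε v1 v2 : ℤ, (ε = 1 ∨ ε = -1) ∧ g.val = !![ε,0,v1; 0,ε,v2; 0,0,1]}
  one_mem' := ⟨1, 0, 0, Or.inl rfl, by rw [Units.val_one, Matrix.one_fin_three]⟩
  mul_mem' := by
    rintro g h ⟨ε, v1, v2, hε, hg⟩ ⟨δ, w1, w2, hδ, hh⟩
    refine ⟨ε * δ, ε * w1 + v1, ε * w2 + v2, ?_, ?_⟩
    · rcases hε with rfl | rfl <;> rcases hδ with rfl | rfl <;> norm_num
    · rw [Units.val_mul, hg, hh]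
      norm_num [Matrix.mul_fin_three]
  inv_mem' := by
    rintro g ⟨ε, v1, v2, hε, hg⟩
    have key : ∀ w1 w2 : ℤ, g.val * !![ε,0,w1; 0,ε,w2; 0,0,1] = 1 →
        (g⁻¹).val = !![ε,0,w1; 0,ε,w2; 0,0,1] := by
      intro w1 w2 hmul
      calc (g⁻¹).val = (g⁻¹).val * (g.val * !![ε,0,w1; 0,ε,w2; 0,0,1]) := by
              rw [hmul, mul_one]
        _ = ((g⁻¹).val * g.val) * !![ε,0,w1; 0,ε,w2; 0,0,1] := by rw [mul_assoc]
        _ = !![ε,0,w1; 0,ε,w2; 0,0,1] := by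
              rw [← Units.val_mul, inv_mul_cancel, Units.val_one, one_mul]
    rcases hε with rfl | rfl
    · exact ⟨1, -v1, -v2, Or.inl rfl, key (-v1) (-v2) (by
        rw [hg, Matrix.one_fin_three]; norm_num [Matrix.mul_fin_three])⟩
    · exact ⟨-1, v1, v2, Or.inr rfl, key (v1) (v2) (by
        rw [hg, Matrix.one_fin_three]; norm_num [Matrix.mul_fin_three])⟩


-- ================= glue section =================
noncomputable section Glue

def mfree : FreeGroup (Fin 2) →* G2 := FreeGroup.lift ![uM, uN]
def mm : FreeGroup (Fin 2) →* G3 := Ψ.comp mfree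
def Φ : FreeGroup (Fin 2) →* MulAut (W 3) := FreeGroup.lift ![φ, ψ]

lemma mm_val (u : FreeGroup (Fin 2)) : (mm u).val = emb (mfree u).val := rfl

lemma ρ_of (i : Fin 3) : ρ (PresentedGroup.of i) = ![ua, ub, uc] i :=
  PresentedGroup.toGroup.of rho_rels

lemma uP_val : (Ψ uM).val = !![1,-4,0; 0,1,0; 0,0,1] := by
  show emb uM.val = _
  ext i j
  fin_cases i <;> fin_cases j <;> simp [emb, uM]
lemma uP_inv_val : ((Ψ uM)⁻¹).val = !![1,4,0; 0,1,0; 0,0,1] := by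
  rw [← map_inv]
  show emb (uM⁻¹).val = _
  ext i j
  fin_cases i <;> fin_cases j <;> simp [emb, uM, Units.inv_mk]
lemma uQ_val : (Ψ uN).val = !![1,0,0; -4,1,0; 0,0,1] := by
  show emb uN.val = _
  ext i j
  fin_cases i <;> fin_cases j <;> simp [emb, uN]
lemma uQ_inv_val : ((Ψ uN)⁻¹).val = !![1,0,0; 4,1,0; 0,0,1] := by
  rw [← map_inv]
  show emb (uN⁻¹).val = _
  ext i j
  fin_cases i <;> fin_cases j <;> simp [emb, uN, Units.inv_mk]

lemma interφ (g : W 3) : ρ (φf g) = (Ψ uM) * ρ g * (Ψ uM)⁻¹ := by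
  have h : ρ.comp φf = ((MulAut.conj (Ψ uM)).toMonoidHom).comp ρ := by
    refine PresentedGroup.ext fun i => ?_
    fin_cases i <;>
      · simp only [MonoidHom.comp_apply, MulEquiv.coe_toMonoidHom, MulAut.conj_apply]
        rw [eq_mul_inv_iff_mul_eq]
        refine Units.ext ?_
        simp [φf, PresentedGroup.toGroup.of, fword, map_mul, x, ρ_of,
          Units.val_mul, uP_val, ua, ub, uc]
        try norm_num [Matrix.mul_fin_three, ma, mb, mc]
  exact DFunLike.congr_fun h g

lemma interψ (g : W 3) : ρ (ψf g) = (Ψ uN) * ρ g * (Ψ uN)⁻¹ := by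
  have h : ρ.comp ψf = ((MulAut.conj (Ψ uN)).toMonoidHom).comp ρ := by
    refine PresentedGroup.ext fun i => ?_
    fin_cases i <;>
      · simp only [MonoidHom.comp_apply, MulEquiv.coe_toMonoidHom, MulAut.conj_apply]
        rw [eq_mul_inv_iff_mul_eq]
        refine Units.ext ?_
        simp [ψf, PresentedGroup.toGroup.of, gword, map_mul, x, ρ_of,
          Units.val_mul, uQ_val, ua, ub, uc]
        try norm_num [Matrix.mul_fin_three, ma, mb, mc]
  exact DFunLike.congr_fun h g

lemma inter (u : FreeGroup (Fin 2)) : ∀ g : W 3, ρ (Φ u g) = mm u * ρ g * (mm u)⁻¹ := by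
  induction u using FreeGroup.induction_on with
  | C1 =>
      intro g
      simp [Φ, mm]
  | of i =>
      intro g
      have hpure : (pure i : FreeGroup (Fin 2)) = FreeGroup.of i := rfl
      fin_cases i
      · simpa [Φ, mm, mfree, FreeGroup.lift_apply_of] using interφ g
      · simpa [Φ, mm, mfree, FreeGroup.lift_apply_of] using interψ g
  | inv_of i hi =>
      intro g
      have hpure : (pure i : FreeGroup (Fin 2)) = FreeGroup.of i := rfl
      have h1 := hi ((Φ (FreeGroup.of i))⁻¹ g)
      have h2 : Φ (FreeGroup.of i) ((Φ (FreeGroup.of i))⁻¹ g) = g := by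
        simp
      rw [map_inv, map_inv]
      rw [h2] at h1
      rw [h1]
      group
  | mul u v hu hv =>
      intro g
      rw [map_mul, map_mul]
      have h1 : (Φ u * Φ v) g = Φ u (Φ v g) := rfl
      rw [h1, hu, hv]
      group

lemma ρ_mem (w : W 3) : ρ w ∈ SAff := by
  have := PresentedGroup.generated_by (coxeterRels 3) (SAff.comap ρ) ?_ w
  · exact this
  · intro j
    show ρ (PresentedGroup.of j) ∈ SAff
    rw [ρ_of]
    fin_cases j
    · exact ⟨-1, 0, 0, Or.inr rfl, rfl⟩
    · exact ⟨-1, 1, 0, Or.inr rfl, rfl⟩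
    · exact ⟨-1, 0, 1, Or.inr rfl, rfl⟩

lemma πmod_uM : πmod uM = 1 := by
  refine Units.ext ?_
  show (Int.castRingHom (ZMod 4)).mapMatrix uM.val = 1
  rw [RingHom.mapMatrix_apply, Matrix.one_fin_two]
  ext i j
  fin_cases i <;> fin_cases j <;> simp [uM, Matrix.map_apply] <;> decide

lemma πmod_uN : πmod uN = 1 := by
  refine Units.ext ?_
  show (Int.castRingHom (ZMod 4)).mapMatrix uN.val = 1
  rw [RingHom.mapMatrix_apply, Matrix.one_fin_two]
  ext i j
  fin_cases i <;> fin_cases j <;> simp [uN, Matrix.map_apply] <;> decide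

lemma hmod (u : FreeGroup (Fin 2)) : πmod (mfree u) = 1 := by
  have h : πmod.comp mfree = 1 := by
    refine FreeGroup.ext_hom _ _ ?_
    intro i
    fin_cases i <;> simp [mfree, πmod_uM, πmod_uN]
  calc πmod (mfree u) = (πmod.comp mfree) u := rfl
    _ = 1 := by rw [h]; rfl

lemma crux (u : FreeGroup (Fin 2)) (w : W 3) (h : Φ u = MulAut.conj w) : u = 1 := by
  have hc : ∀ g : W 3, ρ w * ρ g * (ρ w)⁻¹ = mm u * ρ g * (mm u)⁻¹ := by
    intro g
    have h1 := inter u g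
    rw [h, MulAut.conj_apply] at h1
    rw [map_mul, map_mul, map_inv] at h1
    exact h1
  set d : G3 := (ρ w)⁻¹ * mm u with hd
  have hcomm : ∀ g : W 3, d * ρ g = ρ g * d := by
    intro g
    calc d * ρ g = (ρ w)⁻¹ * (mm u * ρ g * (mm u)⁻¹) * mm u := by rw [hd]; group
      _ = (ρ w)⁻¹ * (ρ w * ρ g * (ρ w)⁻¹) * mm u := by rw [← hc g]
      _ = ρ g * d := by rw [hd]; group
  have hma : d.val * ma = ma * d.val := by
    have := congrArg Units.val (hcomm (x 3 0))
    simpa [Units.val_mul, ρ_x, ua] using this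
  have hmb : d.val * mb = mb * d.val := by
    have := congrArg Units.val (hcomm (x 3 1))
    simpa [Units.val_mul, ρ_x, ub] using this
  have hmc : d.val * mc = mc * d.val := by
    have := congrArg Units.val (hcomm (x 3 2))
    simpa [Units.val_mul, ρ_x, uc] using this
  obtain ⟨ε, v1, v2, hε, hval⟩ := ρ_mem w
  have hMval : (mfree u).val = !![ε, 0; 0, ε] := by
    rcases cent d hma hmb hmc with hd1 | hd1
    · -- mm u = ρ w
      have hmu : mm u = ρ w := by
        have : (ρ w)⁻¹ * mm u = 1 := by rw [← hd, hd1]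
        exact (inv_mul_eq_one.mp this).symm
      have hvv : emb (mfree u).val = !![ε,0,v1; 0,ε,v2; 0,0,1] := by
        rw [← mm_val, hmu, hval]
      ext i j
      fin_cases i <;> fin_cases j
      · have h00 := congrFun (congrFun hvv 0) 0
        simp [emb] at h00; simpa using h00
      · have h01 := congrFun (congrFun hvv 0) 1
        simp [emb] at h01; simpa using h01
      · have h10 := congrFun (congrFun hvv 1) 0
        simp [emb] at h10; simpa using h10
      · have h11 := congrFun (congrFun hvv 1) 1
        simp [emb] at h11; simpa using h11
    · -- mm u = ρ w * (-1), impossible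
      exfalso
      have hmu : mm u = ρ w * (-1) := by
        rw [← hd1, hd]
        group
      have hvv : emb (mfree u).val = (ρ w).val * (-1) := by
        rw [← mm_val, hmu, Units.val_mul, Units.val_neg, Units.val_one]
      have h22 := congrFun (congrFun hvv 2) 2
      rw [hval] at h22
      simp [emb, Matrix.mul_neg, Matrix.mul_one, Matrix.neg_apply] at h22
      try omega
  rcases hε with rfl | rfl
  · -- mfree u = 1
    have h1 : mfree u = 1 := by
      refine Units.ext ?_
      rw [hMval, Units.val_one, Matrix.one_fin_two]
    have : mfree u = mfree 1 := by rw [h1, map_one]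
    exact sanov_injective this
  · -- contradiction with mod 4
    exfalso
    have hp := hmod u
    have hpval : ((Int.castRingHom (ZMod 4)).mapMatrix (mfree u).val) = 1 :=
      congrArg Units.val hp
    rw [hMval, RingHom.mapMatrix_apply] at hpval
    have h00 := congrFun (congrFun hpval 0) 0
    simp [Matrix.map_apply, Matrix.one_apply] at h00
    exact absurd h00 (by decide)

end Glue
end FCAux

open FCAux in
/-- There is a subgroup of `Aut (W 3)` which is free of rank 2 and meets the inner
automorphisms trivially; in particular `Out (W 3)` contains a free subgroup of rank 2. -/
theorem exists_free_subgroup_aut :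
    ∃ H : Subgroup (MulAut (W 3)),
      Nonempty (↥H ≃* FreeGroup (Fin 2)) ∧ H ⊓ Inn (W 3) = ⊥ ∧
        ∃ K : Subgroup (Out (W 3)), Nonempty (↥K ≃* FreeGroup (Fin 2)) := by
  classical
  have hinj : Function.Injective Φ := by
    intro u v h
    have h1 : Φ (u * v⁻¹) = MulAut.conj (1 : W 3) := by
      rw [map_mul, map_inv, h, map_one, mul_inv_cancel]
    exact mul_inv_eq_one.mp (crux _ _ h1)
  refine ⟨Φ.range, ⟨(MonoidHom.ofInjective hinj).symm⟩, ?_, ?_⟩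
  · refine (Subgroup.eq_bot_iff_forall _).mpr ?_
    intro α hα
    rw [Subgroup.mem_inf] at hα
    obtain ⟨⟨u, hu⟩, ⟨w, hw⟩⟩ := hα
    have h1 : Φ u = MulAut.conj w := hu.trans hw.symm
    rw [← hu, crux u w h1, map_one]
  · set ΦK : FreeGroup (Fin 2) →* Out (W 3) := (QuotientGroup.mk' (Inn (W 3))).comp Φ with hΦK
    have hKinj : Function.Injective ΦK := by
      intro u v h
      have h1 : ΦK (u * v⁻¹) = 1 := by
        rw [map_mul, map_inv, h, mul_inv_cancel]
      have h2 : Φ (u * v⁻¹) ∈ Inn (W 3) := by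
        rw [hΦK] at h1
        exact (QuotientGroup.eq_one_iff _).mp h1
      obtain ⟨w, hw⟩ := h2
      exact mul_inv_eq_one.mp (crux _ _ hw.symm)
    exact ⟨ΦK.range, ⟨(MonoidHom.ofInjective hKinj).symm⟩⟩
end

section
/- For every n ≥ 3, every partial W_2-basis of W_n has cardinality at most ⌊n/2⌋. -/
/-- A family of subgroups is a free product decomposition of `G` if the canonical
homomorphism from their abstract free product to `G` is an isomorphism. -/
def IsFreeProductOf {G : Type*} [Group G] {ι : Type*} (H : ι → Subgroup G) : Prop :=
  Function.Bijective (Monoid.CoprodI.lift fun i => (H i).subtype)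

/-- A subgroup is a free factor if it admits a free complement. -/
def IsFreeFactor {G : Type*} [Group G] (A : Subgroup G) : Prop :=
  ∃ B : Subgroup G, IsFreeProductOf (fun b : Bool => bif b then A else B)

/-- The conjugacy class of a subgroup. -/
def conjClass {G : Type*} [Group G] (A : Subgroup G) : Set (Subgroup G) :=
  {B | ∃ g : G, B = Subgroup.map (MulAut.conj g).toMonoidHom A}

/-- A partial `W₂`-basis of `W n`: a nonempty finite set of conjugacy classes of subgroups
isomorphic to `W 2` admitting representatives `A_1, …, A_k` such that
`W n = A_1 * ⋯ * A_k * B` for some subgroup `B`. -/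
def IsPartialW2Basis (n : ℕ) (S : Set (Set (Subgroup (W n)))) : Prop :=
  ∃ (k : ℕ) (A : Fin k → Subgroup (W n)) (B : Subgroup (W n)),
    0 < k ∧
    (∀ i, Nonempty (↥(A i) ≃* W 2)) ∧
    IsFreeProductOf (fun o : Option (Fin k) => o.elim B A) ∧
    Function.Injective (fun i => conjClass (A i)) ∧
    S = Set.range fun i => conjClass (A i)

/-- A subgroup of `W n` is `X*`-paired if it is generated by conjugates of `x_{2i-1}` and
`x_{2i}` for some `i ≤ ⌊n/2⌋` (with `0`-based indexing: `x_{2i}` and `x_{2i+1}`). -/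
def IsXPaired (n : ℕ) (A : Subgroup (W n)) : Prop :=
  ∃ (i : ℕ) (hi : 2 * i + 1 < n) (g h : W n),
    A = Subgroup.closure
      {g * x n ⟨2 * i, by omega⟩ * g⁻¹, h * x n ⟨2 * i + 1, hi⟩ * h⁻¹}

/-- The poset `BP_n` of partial `W₂`-bases of `W n`, ordered by inclusion. -/
def BP (n : ℕ) : Type := {S : Set (Set (Subgroup (W n))) // IsPartialW2Basis n S}

instance (n : ℕ) : PartialOrder (BP n) :=
  inferInstanceAs (PartialOrder {S : Set (Set (Subgroup (W n))) // IsPartialW2Basis n S})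

/-- The poset `BP_n^*` of partial `W₂`-bases all of whose elements are conjugacy classes
of `X*`-paired free `W₂`-factors, ordered by inclusion. -/
def BPstar (n : ℕ) : Type :=
  {S : Set (Set (Subgroup (W n))) //
    IsPartialW2Basis n S ∧ ∀ C ∈ S, ∃ A : Subgroup (W n), IsXPaired n A ∧ C = conjClass A}

instance (n : ℕ) : PartialOrder (BPstar n) :=
  inferInstanceAs (PartialOrder {S : Set (Set (Subgroup (W n))) //
    IsPartialW2Basis n S ∧ ∀ C ∈ S, ∃ A : Subgroup (W n), IsXPaired n A ∧ C = conjClass A})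

open CategoryTheory in
/-- The geometric realization of the order complex (nerve) of a poset. -/
noncomputable def orderComplex (Q : Type) [Preorder Q] : TopCat :=
  SSet.toTop.obj (nerve Q)


/-- Every element of `Multiplicative (ZMod 2)` squares to one. -/
lemma V_sq_eq_one : ∀ a : Multiplicative (ZMod 2), a ^ 2 = 1 := by decide

/-- Any function from the generators to `Multiplicative (ZMod 2)` extends to a
homomorphism on the free Coxeter group. -/
def toV (m : ℕ) (f : Fin m → Multiplicative (ZMod 2)) :
    W m →* Multiplicative (ZMod 2) :=
  PresentedGroup.toGroup (f := f) (by
    rintro r ⟨i, rfl⟩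
    rw [map_pow, FreeGroup.lift_apply_of]
    exact V_sq_eq_one _)

lemma toV_of (m : ℕ) (f : Fin m → Multiplicative (ZMod 2)) (i : Fin m) :
    toV m f (x m i) = f i :=
  PresentedGroup.toGroup.of _

/-- Every partial `W₂`-basis of `W n` has cardinality at most `⌊n/2⌋`. -/
theorem partial_basis_card_le (n : ℕ) (hn : 3 ≤ n)
    (S : Set (Set (Subgroup (W n)))) (hS : IsPartialW2Basis n S) :
    S.ncard ≤ n / 2 := by
  obtain ⟨k, A, B, hk, hA2, hfree, hinj, rfl⟩ := hS
  have hcard : (Set.range fun i => conjClass (A i)).ncard = k := by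
    rw [← Nat.card_coe_set_eq, Nat.card_range_of_injective hinj,
      Nat.card_eq_fintype_card, Fintype.card_fin]
  rw [hcard]
  set V := Multiplicative (ZMod 2)
  set M : Option (Fin k) → Subgroup (W n) := fun o => o.elim B A with hM
  let e : Monoid.CoprodI (fun o => ↥(M o)) ≃* W n :=
    MulEquiv.ofBijective (Monoid.CoprodI.lift fun o => (M o).subtype) hfree
  -- restriction to generators is injective
  let r : (W n →* V) → (Fin n → V) := fun φ i => φ (x n i)
  have hrinj : Function.Injective r := by
    intro φ ψ h
    exact PresentedGroup.ext fun i => congrFun h i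
  have hfin : Finite (W n →* V) := Finite.of_injective r hrinj
  -- restriction to the free factors is surjective
  let σ : (W n →* V) → (∀ i : Fin k, (↥(A i) →* V)) := fun φ i => φ.comp (A i).subtype
  have hσ : Function.Surjective σ := by
    intro ψ
    let homs : ∀ o : Option (Fin k), ↥(M o) →* V := fun o =>
      match o with
      | none => 1
      | some i => ψ i
    refine ⟨(Monoid.CoprodI.lift homs).comp e.symm.toMonoidHom, ?_⟩
    funext i
    refine MonoidHom.ext fun a => ?_
    have hsymm : e.symm ((A i).subtype a) = Monoid.CoprodI.of (i := some i) a := by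
      rw [MulEquiv.symm_apply_eq]
      show Monoid.CoprodI.lift (fun o => (M o).subtype) (Monoid.CoprodI.of (i := some i) a)
        = (A i).subtype a
      erw [Monoid.CoprodI.lift_of]
    show Monoid.CoprodI.lift homs (e.symm ((A i).subtype a)) = ψ i a
    rw [hsymm]
    erw [Monoid.CoprodI.lift_of]
  have hfin2 : Finite (∀ i : Fin k, (↥(A i) →* V)) := Finite.of_surjective σ hσ
  -- the injection on each factor via the isomorphism with W 2
  let ei : ∀ i : Fin k, ↥(A i) ≃* W 2 := fun i => (hA2 i).some
  let τ : (Fin k → Fin 2 → V) → (∀ i : Fin k, (↥(A i) →* V)) := fun F i =>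
    (toV 2 (F i)).comp ((ei i).symm.symm : ↥(A i) ≃* W 2).toMonoidHom
  have hτ : Function.Injective τ := by
    intro F G h
    funext i j
    have h2 := congrFun h i
    have h3 := congrArg (fun φ => φ ((ei i).symm (x 2 j))) h2
    simpa [τ, toV_of] using h3
  -- counting
  have h1 : Nat.card (∀ i : Fin k, (↥(A i) →* V)) ≤ Nat.card (W n →* V) :=
    Nat.card_le_card_of_surjective σ hσ
  have h2 : Nat.card (W n →* V) ≤ 2 ^ n := by
    calc Nat.card (W n →* V) ≤ Nat.card (Fin n → V) := Nat.card_le_card_of_injective r hrinj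
    _ = 2 ^ n := by simp [V, Nat.card_eq_fintype_card]
  have h3 : 2 ^ (2 * k) ≤ Nat.card (∀ i : Fin k, (↥(A i) →* V)) := by
    calc (2 : ℕ) ^ (2 * k) = Nat.card (Fin k → Fin 2 → V) := by
          simp [V, Nat.card_eq_fintype_card, pow_mul, mul_comm k 2]
    _ ≤ _ := Nat.card_le_card_of_injective τ hτ
  have hkn : 2 * k ≤ n :=
    (Nat.pow_le_pow_iff_right (by norm_num)).mp (h3.trans (h1.trans h2))
  omega
end
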